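/- arXiv:2506.20196 — 2 statements merged into one kernel-verified Lean document; each statement's English description precedes it below -/
import Mathlib

section
/- (Correctness of the 3D-MTM-NL recurrence, vertical case) With h, v as defined for feasible no-left-turn monotone lattice paths, for a vertex v with lower neighbor v′: if the weight w_{v′} violates u_1 ≤ w_{v′} ≤ u_2 then v_v = ∞; otherwise v_v = min(h_{v′} + 1, v_{v′}). -/
/-- The vertex reached after the first `k` steps of a monotone lattice path starting
at the origin, where `true` is a right step `(+1,0)` and `false` is an up step `(0,+1)`. -/
def pathPos (s : List Bool) (k : ℕ) : ℕ × ℕ :=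
  ((s.take k).count true, (s.take k).count false)

/-- All vertices of the path lie in the `n × n` grid `{0, …, n-1}²`. -/
def InGrid (n : ℕ) (s : List Bool) : Prop :=
  ∀ k ≤ s.length, (pathPos s k).1 < n ∧ (pathPos s k).2 < n

/-- The number of turns of the path: positions where consecutive steps differ. -/
def pathTurns (s : List Bool) : ℕ :=
  (s.zip s.tail).countP (fun q => q.1 != q.2)

/-- The energy collected by the path: sum of the weights of the vertices on its
vertical (up) runs, excluding each run's top endpoint, i.e. the vertices at the
bottom of each up step. -/
def pathEnergy (w : ℕ × ℕ → ℝ) (s : List Bool) : ℝ :=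
  ∑ j ∈ Finset.range s.length, if s.getD j true = false then w (pathPos s j) else 0

/-- The path is feasible for the thresholds `u₁ ≤ u₂`: every vertical point
(vertex at the bottom of an up step) has weight in `[u₁, u₂]`. -/
def Feasible (w : ℕ × ℕ → ℝ) (u₁ u₂ : ℝ) (s : List Bool) : Prop :=
  ∀ j < s.length, s.getD j true = false →
    u₁ ≤ w (pathPos s j) ∧ w (pathPos s j) ≤ u₂

/-- `hval n w u₁ u₂ v` is the minimum number of turns over feasible no-left-turn
monotone lattice paths from the origin to `v` whose last step is horizontal
(`⊤` if none exists), with the base case `hval O = 0`. -/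
noncomputable def hval (n : ℕ) (w : ℕ × ℕ → ℝ) (u₁ u₂ : ℝ) (v : ℕ × ℕ) : ℕ∞ :=
  if v = (0, 0) then 0 else
    sInf {c : ℕ∞ | ∃ s : List Bool, InGrid n s ∧ Feasible w u₁ u₂ s ∧
      pathPos s s.length = v ∧ s.getLast? = some true ∧ c = (pathTurns s : ℕ∞)}

/-- `vval n w u₁ u₂ v` is the analogous minimum over feasible paths whose last step
is vertical, with the base case `vval O = 0`. -/
noncomputable def vval (n : ℕ) (w : ℕ × ℕ → ℝ) (u₁ u₂ : ℝ) (v : ℕ × ℕ) : ℕ∞ :=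
  if v = (0, 0) then 0 else
    sInf {c : ℕ∞ | ∃ s : List Bool, InGrid n s ∧ Feasible w u₁ u₂ s ∧
      pathPos s s.length = v ∧ s.getLast? = some false ∧ c = (pathTurns s : ℕ∞)}

section helpers

lemma pathPos_append (s t : List Bool) (k : ℕ) (h : k ≤ s.length) :
    pathPos (s ++ t) k = pathPos s k := by
  simp [pathPos, List.take_append_of_le_length h]

lemma pathPos_concat_false (s : List Bool) :
    pathPos (s ++ [false]) (s.length + 1) =
      ((pathPos s s.length).1, (pathPos s s.length).2 + 1) := by
  have : (s ++ [false]).take (s.length + 1) = s ++ [false] := by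
    apply List.take_of_length_le; simp
  simp [pathPos, this]

lemma getD_concat_lt (s : List Bool) (x : Bool) (j : ℕ) (h : j < s.length) :
    (s ++ [x]).getD j true = s.getD j true := by
  rw [List.getD_eq_getElem?_getD, List.getD_eq_getElem?_getD,
    List.getElem?_append_left h]

lemma getD_concat_self (s : List Bool) (x : Bool) :
    (s ++ [x]).getD s.length true = x := by
  rw [List.getD_eq_getElem?_getD]
  simp

lemma feasible_concat_false (w : ℕ × ℕ → ℝ) (u₁ u₂ : ℝ) (s : List Bool) :
    Feasible w u₁ u₂ (s ++ [false]) ↔ Feasible w u₁ u₂ s ∧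
      (u₁ ≤ w (pathPos s s.length) ∧ w (pathPos s s.length) ≤ u₂) := by
  constructor
  · intro hf
    refine ⟨fun j hj hd => ?_, ?_⟩
    · have := hf j (by simp; omega) (by rwa [getD_concat_lt _ _ _ hj])
      rwa [pathPos_append _ _ _ hj.le] at this
    · have := hf s.length (by simp) (getD_concat_self s false)
      rwa [pathPos_append _ _ _ le_rfl] at this
  · rintro ⟨hf, hb⟩ j hj hd
    simp only [List.length_append, List.length_singleton] at hj
    rcases lt_or_eq_of_le (Nat.lt_succ_iff.1 hj) with hlt | heq
    · rw [getD_concat_lt _ _ _ hlt] at hd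
      rw [pathPos_append _ _ _ hlt.le]
      exact hf j hlt hd
    · subst heq
      rwa [pathPos_append _ _ _ le_rfl]

lemma inGrid_concat_false (n : ℕ) (s : List Bool) :
    InGrid n (s ++ [false]) ↔ InGrid n s ∧
      (pathPos s s.length).1 < n ∧ (pathPos s s.length).2 + 1 < n := by
  constructor
  · intro hg
    refine ⟨fun k hk => ?_, ?_⟩
    · have := hg k (by simp; omega)
      rwa [pathPos_append _ _ _ hk] at this
    · have := hg (s.length + 1) (by simp)
      rwa [pathPos_concat_false] at this
  · rintro ⟨hg, hb⟩ k hk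
    simp only [List.length_append, List.length_singleton] at hk
    rcases lt_or_eq_of_le hk with hlt | heq
    · have hk' : k ≤ s.length := Nat.lt_succ_iff.1 hlt
      rw [pathPos_append _ _ _ hk']
      exact hg k hk'
    · subst heq
      rw [pathPos_concat_false]
      exact hb

lemma pathPos_ne_zero (s : List Bool) (h : s ≠ []) :
    pathPos s s.length ≠ (0, 0) := by
  obtain ⟨a, t, rfl⟩ := List.exists_cons_of_ne_nil h
  intro hc
  have h1 : pathPos (a :: t) (a :: t).length =
      ((a :: t).count true, (a :: t).count false) := by
    simp [pathPos]
  rw [h1, Prod.mk.injEq] at hc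
  cases a
  · simp [List.count_cons] at hc
  · simp [List.count_cons] at hc

lemma pathTurns_cons2 (a b : Bool) (t : List Bool) :
    pathTurns (a :: b :: t) = pathTurns (b :: t) + (if a = b then 0 else 1) := by
  simp only [pathTurns, List.tail_cons, List.zip_cons_cons, List.countP_cons]
  cases a <;> cases b <;> simp

lemma pathTurns_concat : ∀ (s : List Bool) (x : Bool),
    pathTurns (s ++ [x]) = pathTurns s +
      (match s.getLast? with | none => 0 | some y => if y = x then 0 else 1)
  | [], x => by simp [pathTurns]
  | [a], x => by
      simp only [List.singleton_append, List.getLast?_singleton]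
      rw [pathTurns_cons2]
      simp [pathTurns]
  | a :: b :: t, x => by
      have ih := pathTurns_concat (b :: t) x
      have h1 : (a :: b :: t) ++ [x] = a :: ((b :: t) ++ [x]) := by simp
      rw [h1, List.cons_append, pathTurns_cons2, ← List.cons_append, ih,
        pathTurns_cons2]
      simp [List.getLast?_cons_cons]
      ring

lemma exists_concat_of_getLast? (s : List Bool) (x : Bool) (h : s.getLast? = some x) :
    ∃ s', s = s' ++ [x] := by
  rcases List.eq_nil_or_concat s with rfl | ⟨l, y, rfl⟩
  · simp at h
  · rw [List.concat_eq_append] at h ⊢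
    rw [List.getLast?_concat] at h
    exact ⟨l, by simp_all⟩

lemma sInf_mem_of_ne_top {T : Set ℕ∞} (h : sInf T ≠ ⊤) : sInf T ∈ T := by
  by_contra hmem
  have h2 : sInf T + 1 ≤ sInf T := le_sInf fun c hc =>
    (ENat.add_one_le_iff h).2 (lt_of_le_of_ne (sInf_le hc) fun e => hmem (e ▸ hc))
  exact absurd ((ENat.add_one_le_iff h).1 h2) (lt_irrefl _)

lemma vval_eq_sInf (n : ℕ) (w : ℕ × ℕ → ℝ) (u₁ u₂ : ℝ) (v : ℕ × ℕ) (h : v ≠ (0, 0)) :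
    vval n w u₁ u₂ v = sInf {c : ℕ∞ | ∃ s : List Bool, InGrid n s ∧ Feasible w u₁ u₂ s ∧
      pathPos s s.length = v ∧ s.getLast? = some false ∧ c = (pathTurns s : ℕ∞)} := by
  rw [vval, if_neg h]

lemma hval_eq_sInf (n : ℕ) (w : ℕ × ℕ → ℝ) (u₁ u₂ : ℝ) (v : ℕ × ℕ) (h : v ≠ (0, 0)) :
    hval n w u₁ u₂ v = sInf {c : ℕ∞ | ∃ s : List Bool, InGrid n s ∧ Feasible w u₁ u₂ s ∧
      pathPos s s.length = v ∧ s.getLast? = some true ∧ c = (pathTurns s : ℕ∞)} := by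
  rw [hval, if_neg h]

end helpers

/-- Correctness of the 3D-MTM-NL recurrence, vertical case: for a vertex `v` with
lower neighbor `v'`, `v_v = ⊤` if `w v'` violates the thresholds, and otherwise
`v_v = min (h_v' + 1) (v_v')`. -/
theorem vval_recurrence (n : ℕ) (w : ℕ × ℕ → ℝ) (u₁ u₂ : ℝ) (hu : u₁ ≤ u₂)
    (v : ℕ × ℕ) (h1 : 0 < v.2) (h2 : v.1 < n) (h3 : v.2 < n) :
    (¬ (u₁ ≤ w (v.1, v.2 - 1) ∧ w (v.1, v.2 - 1) ≤ u₂) →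
      vval n w u₁ u₂ v = ⊤) ∧
    ((u₁ ≤ w (v.1, v.2 - 1) ∧ w (v.1, v.2 - 1) ≤ u₂) →
      vval n w u₁ u₂ v =
        min (hval n w u₁ u₂ (v.1, v.2 - 1) + 1) (vval n w u₁ u₂ (v.1, v.2 - 1))) := by
  obtain ⟨a, b⟩ := v
  dsimp only at h1 h2 h3 ⊢
  have hv : (a, b) ≠ ((0 : ℕ), (0 : ℕ)) := by
    intro h; rw [Prod.mk.injEq] at h; omega
  have hb : b - 1 + 1 = b := Nat.sub_add_cancel h1
  constructor
  · -- weight out of range: no feasible path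
    intro hbad
    rw [vval_eq_sInf _ _ _ _ _ hv, sInf_eq_top]
    rintro c ⟨s, hg, hf, hp, hl, rfl⟩
    exfalso
    obtain ⟨s', rfl⟩ := exists_concat_of_getLast? s false hl
    rw [List.length_append, List.length_singleton, pathPos_concat_false] at hp
    rw [Prod.mk.injEq] at hp
    have hp' : pathPos s' s'.length = (a, b - 1) := by
      rw [Prod.ext_iff]; constructor
      · exact hp.1
      · omega
    have := (feasible_concat_false w u₁ u₂ s').1 hf
    rw [hp'] at this
    exact hbad this.2
  · intro hgood
    by_cases hv' : ((a, b - 1) : ℕ × ℕ) = (0, 0)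
    · -- v' is the origin: a = 0, b = 1
      have ha : a = 0 := by rw [Prod.mk.injEq] at hv'; exact hv'.1
      have hb1 : b = 1 := by rw [Prod.mk.injEq] at hv'; omega
      subst ha; subst hb1
      have e1 : hval n w u₁ u₂ (0, 1 - 1) = 0 := by rw [hval, if_pos hv']
      have e2 : vval n w u₁ u₂ (0, 1 - 1) = 0 := by rw [vval, if_pos hv']
      rw [e1, e2]
      have : min ((0 : ℕ∞) + 1) 0 = 0 := by simp
      rw [this, vval_eq_sInf _ _ _ _ _ hv]
      refine le_antisymm (sInf_le ?_) zero_le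
      refine ⟨[false], ?_, ?_, ?_, rfl, by simp [pathTurns]⟩
      · intro k hk
        simp only [List.length_singleton] at hk
        interval_cases k <;> simp [pathPos] <;> omega
      · intro j hj hd
        simp only [List.length_singleton] at hj
        have : j = 0 := by omega
        subst this
        simpa [pathPos] using hgood
      · simp [pathPos]
    · -- v' is not the origin
      rw [vval_eq_sInf _ _ _ _ _ hv, vval_eq_sInf _ _ _ _ _ hv',
        hval_eq_sInf _ _ _ _ _ hv']
      apply le_antisymm
      · apply le_min
        · -- sInf S ≤ sInf T_h + 1
          by_cases hT : sInf {c : ℕ∞ | ∃ s : List Bool, InGrid n s ∧ Feasible w u₁ u₂ s ∧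
              pathPos s s.length = (a, b - 1) ∧ s.getLast? = some true ∧
              c = (pathTurns s : ℕ∞)} = ⊤
          · rw [hT]; simp
          · obtain ⟨s', hg', hf', hp', hl', hc'⟩ := sInf_mem_of_ne_top hT
            rw [hc']
            apply sInf_le
            refine ⟨s' ++ [false], ?_, ?_, ?_, List.getLast?_concat, ?_⟩
            · refine (inGrid_concat_false n s').2 ⟨hg', ?_, ?_⟩ <;> rw [hp']
              · exact h2
              · dsimp only; rw [hb]; exact h3
            · exact (feasible_concat_false w u₁ u₂ s').2 ⟨hf', by rw [hp']; exact hgood⟩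
            · rw [List.length_append, List.length_singleton, pathPos_concat_false, hp']
              dsimp only; rw [hb]
            · rw [pathTurns_concat, hl']
              push_cast
              ring
        · -- sInf S ≤ sInf T_v
          apply le_sInf
          rintro c ⟨s', hg', hf', hp', hl', rfl⟩
          apply sInf_le
          refine ⟨s' ++ [false], ?_, ?_, ?_, List.getLast?_concat, ?_⟩
          · refine (inGrid_concat_false n s').2 ⟨hg', ?_, ?_⟩ <;> rw [hp']
            · exact h2
            · dsimp only; rw [hb]; exact h3
          · exact (feasible_concat_false w u₁ u₂ s').2 ⟨hf', by rw [hp']; exact hgood⟩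
          · rw [List.length_append, List.length_singleton, pathPos_concat_false, hp']
            dsimp only; rw [hb]
          · rw [pathTurns_concat, hl']
            simp
      · -- lower bound
        apply le_sInf
        rintro c ⟨s, hg, hf, hp, hl, rfl⟩
        obtain ⟨s', rfl⟩ := exists_concat_of_getLast? s false hl
        rw [List.length_append, List.length_singleton, pathPos_concat_false,
          Prod.mk.injEq] at hp
        have hp' : pathPos s' s'.length = (a, b - 1) := by
          rw [Prod.ext_iff]; exact ⟨hp.1, by omega⟩
        have hg' : InGrid n s' := ((inGrid_concat_false n s').1 hg).1
        have hf' : Feasible w u₁ u₂ s' := ((feasible_concat_false w u₁ u₂ s').1 hf).1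
        rcases hlast : s'.getLast? with _ | y
        · exfalso
          have he : s' = [] := List.getLast?_eq_none_iff.1 hlast
          subst he
          have h0 : pathPos [] (List.length ([] : List Bool)) = ((0, 0) : ℕ × ℕ) := by
            simp [pathPos]
          rw [h0] at hp'
          exact hv' hp'.symm
        · cases y
          · -- last step of s' vertical
            refine le_trans (min_le_right _ _) ?_
            refine le_trans (sInf_le ⟨s', hg', hf', hp', hlast, rfl⟩) ?_
            apply le_of_eq
            rw [pathTurns_concat, hlast]
            simp
          · -- last step of s' horizontal
            refine le_trans (min_le_left _ _) ?_
            have hle : sInf {c : ℕ∞ | ∃ s : List Bool, InGrid n s ∧ Feasible w u₁ u₂ s ∧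
                pathPos s s.length = (a, b - 1) ∧ s.getLast? = some true ∧
                c = (pathTurns s : ℕ∞)} ≤ (pathTurns s' : ℕ∞) :=
              sInf_le ⟨s', hg', hf', hp', hlast, rfl⟩
            calc _ ≤ (pathTurns s' : ℕ∞) + 1 := add_le_add_left hle 1
              _ = ((pathTurns s' + 1 : ℕ) : ℕ∞) := by push_cast; ring
              _ = (pathTurns (s' ++ [false]) : ℕ∞) := by
                  rw [pathTurns_concat, hlast]
                  simp
end

section
/- Splitting the grid into two horizontal halves and concatenating an optimal ≤m-turn no-left-turn path on each half (where the second path starts at the column where the first one ends) yields a path whose total energy is at least the energy of an optimal ≤m-turn path on the whole grid restricted to m turns, i.e., OPT_split(m,m) ≥ OPT_whole(m). -/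
/-- The vertex reached after `k` steps of a path starting at vertex `v`. -/
def pathPosFrom (v : ℕ × ℕ) (s : List Bool) (k : ℕ) : ℕ × ℕ :=
  (v.1 + (pathPos s k).1, v.2 + (pathPos s k).2)

/-- All vertices of the path starting at `v` lie in the `n × n` grid. -/
def InGridFrom (n : ℕ) (v : ℕ × ℕ) (s : List Bool) : Prop :=
  ∀ k ≤ s.length, (pathPosFrom v s k).1 < n ∧ (pathPosFrom v s k).2 < n

/-- The energy of the path starting at `v`. -/
def pathEnergyFrom (w : ℕ × ℕ → ℝ) (v : ℕ × ℕ) (s : List Bool) : ℝ :=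
  ∑ j ∈ Finset.range s.length,
    if s.getD j true = false then w (pathPosFrom v s j) else 0

lemma pathTurns_cons_cons (x y : Bool) (l : List Bool) :
    pathTurns (x :: y :: l) = (if x != y then 1 else 0) + pathTurns (y :: l) := by
  simp [pathTurns, List.countP_cons, Nat.add_comm]

lemma pathTurns_le_cons (x : Bool) (l : List Bool) : pathTurns l ≤ pathTurns (x :: l) := by
  cases l with
  | nil => simp [pathTurns]
  | cons y l' => rw [pathTurns_cons_cons]; omega

lemma pathTurns_append (a b : List Bool) : pathTurns a + pathTurns b ≤ pathTurns (a ++ b) := by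
  induction a with
  | nil => simp [pathTurns]
  | cons x a' ih =>
    cases a' with
    | nil => simpa [pathTurns] using pathTurns_le_cons x b
    | cons y a'' =>
      have h1 : (x :: y :: a'') ++ b = x :: y :: (a'' ++ b) := rfl
      rw [h1, pathTurns_cons_cons, pathTurns_cons_cons]
      have := ih
      simp only [List.cons_append] at this ⊢
      omega

lemma pathTurns_take (s : List Bool) (k : ℕ) : pathTurns (s.take k) ≤ pathTurns s := by
  have := pathTurns_append (s.take k) (s.drop k)
  rw [List.take_append_drop] at this; omega

lemma pathTurns_drop (s : List Bool) (k : ℕ) : pathTurns (s.drop k) ≤ pathTurns s := by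
  have := pathTurns_append (s.take k) (s.drop k)
  rw [List.take_append_drop] at this; omega

lemma pathPos_take (s : List Bool) (k j : ℕ) (h : j ≤ k) :
    pathPos (s.take k) j = pathPos s j := by
  simp [pathPos, List.take_take, Nat.min_eq_left h]

lemma pathPos_add (s : List Bool) (k i : ℕ) :
    pathPos s (k + i) = ((pathPos s k).1 + (pathPos (s.drop k) i).1,
      (pathPos s k).2 + (pathPos (s.drop k) i).2) := by
  simp [pathPos, List.take_add, List.count_append]

lemma pathPosFrom_drop (s : List Bool) (k i : ℕ) :
    pathPosFrom (pathPos s k) (s.drop k) i = pathPos s (k + i) := by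
  rw [pathPos_add]; rfl

lemma pathEnergy_split (w : ℕ × ℕ → ℝ) (s : List Bool) (k : ℕ) (hk : k ≤ s.length) :
    pathEnergy w s = pathEnergy w (s.take k) + pathEnergyFrom w (pathPos s k) (s.drop k) := by
  unfold pathEnergy pathEnergyFrom
  have hlen : s.length = k + (s.drop k).length := by simp [List.length_drop]; omega
  have hlt : (s.take k).length = k := by simp [Nat.min_eq_left hk]
  rw [show (∑ j ∈ Finset.range s.length,
        if s.getD j true = false then w (pathPos s j) else 0) =
      ∑ j ∈ Finset.range (k + (s.drop k).length),
        if s.getD j true = false then w (pathPos s j) else 0 by rw [← hlen],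
    Finset.sum_range_add, hlt]
  congr 1
  · apply Finset.sum_congr rfl
    intro j hj
    rw [Finset.mem_range] at hj
    have hjl : j < s.length := by omega
    have h1 : (s.take k).getD j true = s.getD j true := by
      rw [List.getD_eq_getElem _ _ (by simp; omega), List.getD_eq_getElem _ _ hjl]
      exact List.getElem_take ..
    rw [h1, pathPos_take s k j (le_of_lt hj)]
  · apply Finset.sum_congr rfl
    intro i hi
    rw [Finset.mem_range] at hi
    have hil : k + i < s.length := by omega
    have h1 : (s.drop k).getD i true = s.getD (k + i) true := by
      rw [List.getD_eq_getElem _ _ hi, List.getD_eq_getElem _ _ hil]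
      exact List.getElem_drop ..
    rw [h1, pathPosFrom_drop]

lemma nat_ivt (f : ℕ → ℕ) (h0 : f 0 = 0) (hstep : ∀ k, f (k + 1) ≤ f k + 1)
    (L t : ℕ) (ht : t ≤ f L) : ∃ k ≤ L, f k = t := by
  induction L with
  | zero => exact ⟨0, le_rfl, by omega⟩
  | succ L ih =>
    by_cases h : t ≤ f L
    · obtain ⟨k, hk, hfk⟩ := ih h
      exact ⟨k, hk.trans (Nat.le_succ L), hfk⟩
    · exact ⟨L + 1, le_rfl, by have := hstep L; omega⟩

lemma pathPos_step (s : List Bool) (k : ℕ) :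
    (pathPos s (k + 1)).2 ≤ (pathPos s k).2 + 1 := by
  simp only [pathPos, List.take_succ, List.count_append]
  have : ((s[k]?).toList).count false ≤ ((s[k]?).toList).length := List.count_le_length ..
  have h2 : ((s[k]?).toList).length ≤ 1 := by cases s[k]? <;> simp
  omega

/-- Splitting the grid into two horizontal halves and concatenating an optimal
`≤ m`-turn no-left-turn path on each half (the second starting where the first
ends, in row `⌊n/2⌋`) collects at least as much energy as an optimal `≤ m`-turn
path on the whole grid: `OPT_split(m,m) ≥ OPT_whole(m)`. -/
theorem opt_whole_le_opt_split (n : ℕ) (hn : 0 < n) (w : ℕ × ℕ → ℝ)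
    (hw : ∀ v, 0 ≤ w v) (m : ℕ) :
    sSup {e : EReal | ∃ s : List Bool, InGrid n s ∧
        (pathPos s s.length).2 = n - 1 ∧ pathTurns s ≤ m ∧
        e = (pathEnergy w s : EReal)} ≤
      sSup {e : EReal | ∃ s₁ s₂ : List Bool,
        InGrid n s₁ ∧ pathTurns s₁ ≤ m ∧ (pathPos s₁ s₁.length).2 = n / 2 ∧
        InGridFrom n (pathPos s₁ s₁.length) s₂ ∧ pathTurns s₂ ≤ m ∧
        (pathPosFrom (pathPos s₁ s₁.length) s₂ s₂.length).2 = n - 1 ∧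
        e = ((pathEnergy w s₁ + pathEnergyFrom w (pathPos s₁ s₁.length) s₂ : ℝ) : EReal)} := by
  apply sSup_le_sSup
  rintro e ⟨s, hg, hend, hturns, rfl⟩
  have h0 : (pathPos s 0).2 = 0 := by simp [pathPos]
  have hhalf : n / 2 ≤ (pathPos s s.length).2 := by rw [hend]; omega
  obtain ⟨k, hk, hfk⟩ := nat_ivt (fun k => (pathPos s k).2) h0 (pathPos_step s)
    s.length (n / 2) hhalf
  have hlen1 : (s.take k).length = k := by simp [Nat.min_eq_left hk]
  have hpos1 : pathPos (s.take k) ((s.take k).length) = pathPos s k := by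
    rw [hlen1]; exact pathPos_take s k k le_rfl
  refine ⟨s.take k, s.drop k, ?_, ?_, ?_, ?_, ?_, ?_, ?_⟩
  · intro j hj
    rw [hlen1] at hj
    rw [pathPos_take s k j hj]
    exact hg j (hj.trans hk)
  · exact le_trans (pathTurns_take s k) hturns
  · rw [hpos1]; exact hfk
  · rw [hpos1]
    intro i hi
    rw [pathPosFrom_drop]
    apply hg (k + i)
    simp only [List.length_drop] at hi
    omega
  · exact le_trans (pathTurns_drop s k) hturns
  · rw [hpos1, pathPosFrom_drop]
    have h2 : k + (s.drop k).length = s.length := by simp [List.length_drop]; omega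
    rw [h2]; exact hend
  · rw [hpos1, ← pathEnergy_split w s k hk]
end
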